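/- For unit vectors f_i, f_j in C^M and any orthonormal basis {e_m}_{m=1}^M, one has |⟨f_i, f_j⟩|² ≤ M · ∑_{m=1}^M min{|⟨f_i, e_m⟩|², |⟨f_j, e_m⟩|²}. -/

import Mathlib

open scoped InnerProductSpace

theorem inner_sq_le_sum_min
    (M : ℕ) (f₁ f₂ : EuclideanSpace ℂ (Fin M))
    (hf₁ : ‖f₁‖ = 1) (hf₂ : ‖f₂‖ = 1)
    (e : OrthonormalBasis (Fin M) ℂ (EuclideanSpace ℂ (Fin M))) :
    ‖⟪f₁, f₂⟫_ℂ‖ ^ 2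
      ≤ M * ∑ m : Fin M, min (‖⟪f₁, e m⟫_ℂ‖ ^ 2) (‖⟪f₂, e m⟫_ℂ‖ ^ 2) := by
  set a : Fin M → ℝ := fun m => ‖⟪f₁, e m⟫_ℂ‖ with ha
  set b : Fin M → ℝ := fun m => ‖⟪f₂, e m⟫_ℂ‖ with hb
  set c : Fin M → ℝ := fun m => min (a m) (b m) with hc
  have ha1 : ∀ m, a m ≤ 1 := fun m => by
    simpa [ha, hf₁, e.orthonormal.1 m] using norm_inner_le_norm (𝕜 := ℂ) f₁ (e m)
  have hb1 : ∀ m, b m ≤ 1 := fun m => by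
    simpa [hb, hf₂, e.orthonormal.1 m] using norm_inner_le_norm (𝕜 := ℂ) f₂ (e m)
  have step1 : ‖⟪f₁, f₂⟫_ℂ‖ ≤ ∑ m, c m := by
    rw [← e.sum_inner_mul_inner f₁ f₂]
    refine (norm_sum_le _ _).trans (Finset.sum_le_sum fun m _ => ?_)
    have : ‖⟪f₁, e m⟫_ℂ * ⟪e m, f₂⟫_ℂ‖ = a m * b m := by
      rw [norm_mul, norm_inner_symm (e m) f₂]
    rw [this, hc]
    rcases le_total (a m) (b m) with h | h
    · simpa [min_eq_left h] using
        mul_le_mul_of_nonneg_left (hb1 m) (norm_nonneg _)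
    · simpa [min_eq_right h] using
        mul_le_mul_of_nonneg_right (ha1 m) (norm_nonneg _)
  have hcnn : ∀ m, 0 ≤ c m := fun m => le_min (norm_nonneg _) (norm_nonneg _)
  have step2 : (∑ m, c m) ^ 2 ≤ M * ∑ m, c m ^ 2 := by
    simpa using sq_sum_le_card_mul_sum_sq (s := Finset.univ) (f := c)
  have hcsq : ∀ m, c m ^ 2 = min (a m ^ 2) (b m ^ 2) := fun m => by
    show min (a m) (b m) ^ 2 = _
    rcases le_total (a m) (b m) with h | h
    · rw [min_eq_left h, min_eq_left (pow_le_pow_left₀ (norm_nonneg _) h 2)]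
    · rw [min_eq_right h, min_eq_right (pow_le_pow_left₀ (norm_nonneg _) h 2)]
  calc ‖⟪f₁, f₂⟫_ℂ‖ ^ 2 ≤ (∑ m, c m) ^ 2 :=
        pow_le_pow_left₀ (norm_nonneg _) step1 2
    _ ≤ M * ∑ m, c m ^ 2 := step2
    _ = M * ∑ m : Fin M, min (‖⟪f₁, e m⟫_ℂ‖ ^ 2) (‖⟪f₂, e m⟫_ℂ‖ ^ 2) := by
        simp_rw [hcsq]
        rfl
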